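/- Let H ⊆ ℕ be a coinfinite c.e. set and suppose there is a family of sets Z(ρ) ⊆ ℕ ∖ H (ρ ∈ 2^{<ω}) such that: Z(ε) =* ℕ ∖ H; every Z(ρ) is infinite; every H ∪ Z(ρ) is c.e.; Z(ρ0) ∩ Z(ρ1) = ∅ and Z(ρ) =* Z(ρ0) ∪ Z(ρ1) for all ρ; and for every c.e. set W there is a finite D ⊆ 2^{<ω} with W ∩ (ℕ ∖ H) =* ⋃_{ρ∈D} Z(ρ). Then: (1) every c.e. set W ⊇ H has a complement in L*(H), i.e., there is a c.e. set V ⊇ H with V ∩ W =* H and V ∪ W =* ℕ; and (2) every c.e. set W ⊇ H with W ∖ H infinite splits, i.e., there are c.e. sets W₀, W₁ ⊇ H with W₀ ∪ W₁ =* W, W₀ ∩ W₁ =* H, and both W₀ ∖ H and W₁ ∖ H infinite. Hence L*(H) is an atomless Boolean algebra. -/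

import Mathlib

namespace Hhs

/-- A set is computably enumerable if it is the domain of a partial computable function. -/
def CE (A : Set ℕ) : Prop := ∃ f : ℕ →. ℕ, Nat.Partrec f ∧ A = {n | (f n).Dom}

/-- `X =* Y`: the symmetric difference of `X` and `Y` is finite. -/
def EqStar (X Y : Set ℕ) : Prop := ((X \ Y) ∪ (Y \ X)).Finite

lemma CE.union {A B : Set ℕ} (hA : CE A) (hB : CE B) : CE (A ∪ B) := by
  obtain ⟨f, hf, rfl⟩ := hA
  obtain ⟨g, hg, rfl⟩ := hB
  obtain ⟨k, hk, hk2⟩ := Nat.Partrec.merge' hf hg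
  refine ⟨k, hk, ?_⟩
  ext n
  simpa using ((hk2 n).2).symm

lemma EqStar.rfl {X : Set ℕ} : EqStar X X := by simp [EqStar]

lemma EqStar.symm {X Y : Set ℕ} (h : EqStar X Y) : EqStar Y X := by
  simpa [EqStar, Set.union_comm] using h

lemma EqStar.of_eq {X Y : Set ℕ} (h : X = Y) : EqStar X Y := by simp [h, EqStar]

lemma EqStar.trans {X Y Z : Set ℕ} (h1 : EqStar X Y) (h2 : EqStar Y Z) : EqStar X Z := by
  refine ((h1.union h2).subset ?_)
  intro x hx
  simp only [Set.mem_union, Set.mem_diff] at *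
  tauto

lemma EqStar.union {X₁ Y₁ X₂ Y₂ : Set ℕ} (h1 : EqStar X₁ Y₁) (h2 : EqStar X₂ Y₂) :
    EqStar (X₁ ∪ X₂) (Y₁ ∪ Y₂) := by
  refine ((Set.Finite.union h1 h2).subset ?_)
  intro x hx
  simp only [Set.mem_union, Set.mem_diff] at *
  tauto

lemma EqStar.inter {X₁ Y₁ X₂ Y₂ : Set ℕ} (h1 : EqStar X₁ Y₁) (h2 : EqStar X₂ Y₂) :
    EqStar (X₁ ∩ X₂) (Y₁ ∩ Y₂) := by
  refine ((Set.Finite.union h1 h2).subset ?_)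
  intro x hx
  simp only [Set.mem_union, Set.mem_diff, Set.mem_inter_iff] at *
  tauto

lemma eqStar_union_finite {X F : Set ℕ} (hF : F.Finite) : EqStar (X ∪ F) X := by
  refine hF.subset ?_
  intro x hx
  simp only [Set.mem_union, Set.mem_diff] at *
  tauto

lemma EqStar.finite_diff {X Y : Set ℕ} (h : EqStar X Y) : (X \ Y).Finite :=
  h.subset Set.subset_union_left

lemma EqStar.finite_of_empty {X : Set ℕ} (h : EqStar X ∅) : X.Finite := by
  simpa [EqStar] using h

/-- all binary strings of length `n` -/
def lev : ℕ → Finset (List Bool)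
  | 0 => {[]}
  | n + 1 => (lev n).biUnion fun τ => {τ ++ [false], τ ++ [true]}

lemma length_of_mem_lev : ∀ {n : ℕ} {σ : List Bool}, σ ∈ lev n → σ.length = n := by
  intro n
  induction n with
  | zero => intro σ h; simp [lev] at h; simp [h]
  | succ n ih =>
    intro σ h
    simp only [lev, Finset.mem_biUnion, Finset.mem_insert, Finset.mem_singleton] at h
    obtain ⟨τ, hτ, h⟩ := h
    rcases h with rfl | rfl <;> simp [ih hτ]

lemma mem_lev_of_length : ∀ {n : ℕ} {σ : List Bool}, σ.length = n → σ ∈ lev n := by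
  intro n
  induction n with
  | zero => intro σ h; simp [lev, List.length_eq_zero_iff.1 h]
  | succ n ih =>
    intro σ h
    rcases (List.eq_nil_or_concat σ) with rfl | ⟨τ, b, rfl⟩
    · simp at h
    · simp only [List.concat_eq_append, List.length_append, List.length_singleton] at h
      have hτ : τ ∈ lev n := ih (by omega)
      simp only [lev, Finset.mem_biUnion]
      exact ⟨τ, hτ, by cases b <;> simp⟩

section Tree

variable {H : Set ℕ} {Z : List Bool → Set ℕ}
variable (hsplit : ∀ ρ, Z (ρ ++ [false]) ∩ Z (ρ ++ [true]) = ∅ ∧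
      EqStar (Z ρ) (Z (ρ ++ [false]) ∪ Z (ρ ++ [true])))

include hsplit

lemma diff_desc_finite (ρ τ : List Bool) : (Z (ρ ++ τ) \ Z ρ).Finite := by
  induction τ using List.reverseRecOn with
  | nil => simp
  | append_singleton τ b ih =>
    have h1 : (Z ((ρ ++ τ) ++ [b]) \ Z (ρ ++ τ)).Finite := by
      refine ((hsplit (ρ ++ τ)).2.symm.finite_diff).subset ?_
      intro x hx
      simp only [Set.mem_diff, Set.mem_union] at *
      cases b <;> tauto
    rw [← List.append_assoc] at *
    refine (h1.union ih).subset ?_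
    intro x hx
    simp only [Set.mem_union, Set.mem_diff] at *
    tauto

lemma split_inter_empty (π : List Bool) (b : Bool) :
    Z (π ++ [b]) ∩ Z (π ++ [!b]) = ∅ := by
  cases b
  · simpa using (hsplit π).1
  · simpa [Set.inter_comm] using (hsplit π).1

omit hsplit in
lemma exists_split : ∀ (σ τ : List Bool), σ.length = τ.length → σ ≠ τ →
    ∃ π b σ' τ', σ = π ++ [b] ++ σ' ∧ τ = π ++ [!b] ++ τ' := by
  intro σ
  induction σ with
  | nil => intro τ h hne; simp [(List.length_eq_zero_iff.1 h.symm)] at hne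
  | cons a σ₁ ih =>
    intro τ h hne
    cases τ with
    | nil => simp at h
    | cons c τ₁ =>
      by_cases hac : a = c
      · subst hac
        have hne' : σ₁ ≠ τ₁ := by intro hh; exact hne (by rw [hh])
        obtain ⟨π, b, σ', τ', h1, h2⟩ := ih τ₁ (by simpa using h) hne'
        exact ⟨a :: π, b, σ', τ', by simp [h1], by simp [h2]⟩
      · have : c = !a := by cases a <;> cases c <;> simp_all
        exact ⟨[], a, σ₁, τ₁, by simp, by simp [this]⟩

lemma inter_finite_of_ne {σ τ : List Bool} (hl : σ.length = τ.length) (hne : σ ≠ τ) :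
    (Z σ ∩ Z τ).Finite := by
  obtain ⟨π, b, σ', τ', rfl, rfl⟩ := exists_split σ τ hl hne
  have h1 := diff_desc_finite hsplit (π ++ [b]) σ'
  have h2 := diff_desc_finite hsplit (π ++ [!b]) τ'
  have h3 := split_inter_empty hsplit π b
  refine (h1.union h2).subset ?_
  intro x hx
  simp only [Set.mem_inter_iff, Set.mem_union, Set.mem_diff, List.append_assoc] at *
  have : ¬ (x ∈ Z (π ++ [b]) ∧ x ∈ Z (π ++ [!b])) := by
    intro hh
    have : x ∈ Z (π ++ [b]) ∩ Z (π ++ [!b]) := hh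
    simp [h3] at this
  tauto

omit hsplit in
lemma eqStar_biUnion {α : Type*} [DecidableEq α] {s : Finset α} {f g : α → Set ℕ}
    (h : ∀ a ∈ s, EqStar (f a) (g a)) :
    EqStar (⋃ a ∈ s, f a) (⋃ a ∈ s, g a) := by
  classical
  induction s using Finset.induction with
  | empty => simp [EqStar.rfl]
  | insert a s hni ih =>
    simp only [Finset.set_biUnion_insert]
    exact (h a (Finset.mem_insert_self a s)).union
      (ih fun x hx => h x (Finset.mem_insert_of_mem hx))

lemma eqStar_lev_union (ρ : List Bool) (k : ℕ) :
    EqStar (Z ρ) (⋃ τ ∈ lev k, Z (ρ ++ τ)) := by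
  induction k with
  | zero => simp [lev, EqStar.rfl]
  | succ k ih =>
    refine ih.trans ?_
    have heq : (⋃ τ ∈ lev (k+1), Z (ρ ++ τ)) =
        ⋃ τ ∈ lev k, (Z ((ρ ++ τ) ++ [false]) ∪ Z ((ρ ++ τ) ++ [true])) := by
      simp only [lev, Finset.set_biUnion_biUnion]
      refine Set.iUnion₂_congr fun τ hτ => ?_
      ext x
      simp [List.append_assoc]
    rw [heq]
    exact eqStar_biUnion fun τ _ => (hsplit (ρ ++ τ)).2

lemma biUnion_inter_finite {E F : Finset (List Bool)} {n : ℕ}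
    (hE : ∀ σ ∈ E, σ.length = n) (hF : ∀ τ ∈ F, τ.length = n)
    (hd : ∀ σ ∈ E, σ ∉ F) :
    ((⋃ σ ∈ E, Z σ) ∩ (⋃ τ ∈ F, Z τ)).Finite := by
  have : ((⋃ σ ∈ E, Z σ) ∩ (⋃ τ ∈ F, Z τ)) = ⋃ σ ∈ E, ⋃ τ ∈ F, (Z σ ∩ Z τ) := by
    ext x; simp only [Set.mem_inter_iff, Set.mem_iUnion]; tauto
  rw [this]
  refine E.finite_toSet.biUnion fun σ hσ => F.finite_toSet.biUnion fun τ hτ => ?_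
  exact inter_finite_of_ne hsplit ((hE σ hσ).trans (hF τ hτ).symm)
    (fun h => hd σ hσ (h ▸ hτ))

end Tree

/-- If a coinfinite c.e. set `H` carries a splitting tree of sets `Z ρ` as in the
atomless hyperhypersimple construction, then every c.e. superset of `H` is complemented
in `L*(H)`, and every c.e. superset `W` of `H` with `W \ H` infinite splits into two
halves that are infinite off `H`; hence `L*(H)` is an atomless Boolean algebra. -/
theorem splitting_tree_gives_atomless_boolean_algebra (H : Set ℕ) (Z : List Bool → Set ℕ)
    (hH : CE H) (hco : (Hᶜ : Set ℕ).Infinite)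
    (hsub : ∀ ρ, Z ρ ⊆ Hᶜ)
    (hroot : EqStar (Z []) Hᶜ)
    (hinf : ∀ ρ, (Z ρ).Infinite)
    (hce : ∀ ρ, CE (H ∪ Z ρ))
    (hsplit : ∀ ρ, Z (ρ ++ [false]) ∩ Z (ρ ++ [true]) = ∅ ∧
      EqStar (Z ρ) (Z (ρ ++ [false]) ∪ Z (ρ ++ [true])))
    (hcover : ∀ W : Set ℕ, CE W →
      ∃ D : Finset (List Bool), EqStar (W ∩ Hᶜ) (⋃ ρ ∈ D, Z ρ)) :
    (∀ W : Set ℕ, CE W → H ⊆ W →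
      ∃ V : Set ℕ, CE V ∧ H ⊆ V ∧ EqStar (V ∩ W) H ∧ EqStar (V ∪ W) Set.univ) ∧
    (∀ W : Set ℕ, CE W → H ⊆ W → (W \ H).Infinite →
      ∃ W₀ W₁ : Set ℕ, CE W₀ ∧ CE W₁ ∧ H ⊆ W₀ ∧ H ⊆ W₁ ∧
        EqStar (W₀ ∪ W₁) W ∧ EqStar (W₀ ∩ W₁) H ∧
        (W₀ \ H).Infinite ∧ (W₁ \ H).Infinite) := by
  classical
  -- CE of H joined with any finite union of Z's
  have hceU : ∀ S : Finset (List Bool), CE (H ∪ ⋃ σ ∈ S, Z σ) := by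
    intro S
    induction S using Finset.induction with
    | empty => simpa using hH
    | insert σ S hni ih =>
      have : (H ∪ ⋃ τ ∈ insert σ S, Z τ) = (H ∪ Z σ) ∪ (H ∪ ⋃ τ ∈ S, Z τ) := by
        rw [Finset.set_biUnion_insert]
        ext x; simp only [Set.mem_union]; tauto
      rw [this]
      exact (hce σ).union ih
  -- canonical level-n decomposition of a covered set
  have key : ∀ W : Set ℕ, CE W → H ⊆ W → ∀ m : ℕ, ∃ n ≥ m, ∃ E : Finset (List Bool),
      (∀ σ ∈ E, σ.length = n) ∧ EqStar (W ∩ Hᶜ) (⋃ σ ∈ E, Z σ) := by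
    intro W hW _ m
    obtain ⟨D, hD⟩ := hcover W hW
    set n := m + D.sup List.length with hn
    refine ⟨n, by omega, D.biUnion fun ρ => (lev (n - ρ.length)).image (ρ ++ ·), ?_, ?_⟩
    · intro σ hσ
      simp only [Finset.mem_biUnion, Finset.mem_image] at hσ
      obtain ⟨ρ, hρ, τ, hτ, rfl⟩ := hσ
      have h1 : ρ.length ≤ n := le_trans (Finset.le_sup hρ) (by omega)
      have h2 := length_of_mem_lev hτ
      simp [h2]; omega
    · refine hD.trans ?_
      have heq : (⋃ σ ∈ D.biUnion fun ρ => (lev (n - ρ.length)).image (ρ ++ ·), Z σ)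
          = ⋃ ρ ∈ D, ⋃ τ ∈ lev (n - ρ.length), Z (ρ ++ τ) := by
        ext x
        simp only [Set.mem_iUnion, Finset.mem_biUnion, Finset.mem_image]
        constructor
        · rintro ⟨σ, ⟨ρ, hρ, τ, hτ, rfl⟩, hx⟩; exact ⟨ρ, hρ, τ, hτ, hx⟩
        · rintro ⟨ρ, hρ, τ, hτ, hx⟩; exact ⟨ρ ++ τ, ⟨ρ, hρ, τ, hτ, rfl⟩, hx⟩
      rw [heq]
      exact eqStar_biUnion fun ρ _ => eqStar_lev_union hsplit ρ (n - ρ.length)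
  constructor
  · -- complementation
    intro W hW hHW
    obtain ⟨n, -, E, hElen, hE⟩ := key W hW hHW 0
    have hEsub : ∀ σ ∈ E, σ ∈ lev n := fun σ hσ => mem_lev_of_length (hElen σ hσ)
    set F : Finset (List Bool) := lev n \ E with hF
    set V : Set ℕ := H ∪ ⋃ σ ∈ F, Z σ with hV
    have hWeq : W = H ∪ (W ∩ Hᶜ) := by
      ext x; simp only [Set.mem_union, Set.mem_inter_iff, Set.mem_compl_iff]
      constructor
      · intro hx
        by_cases hxH : x ∈ H
        · exact Or.inl hxH
        · exact Or.inr ⟨hx, hxH⟩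
      · rintro (hx | ⟨hx, -⟩)
        exacts [hHW hx, hx]
    have hWstar : EqStar W (H ∪ ⋃ σ ∈ E, Z σ) :=
      (EqStar.of_eq hWeq).trans (EqStar.rfl.union hE)
    have hFE : ((⋃ σ ∈ F, Z σ) ∩ (⋃ σ ∈ E, Z σ)).Finite := by
      refine biUnion_inter_finite hsplit
        (fun σ hσ => length_of_mem_lev (Finset.mem_sdiff.1 hσ).1) hElen ?_
      intro σ hσ; exact (Finset.mem_sdiff.1 hσ).2
    refine ⟨V, hceU F, Set.subset_union_left, ?_, ?_⟩
    · -- V ∩ W =* H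
      have h1 : EqStar (V ∩ W) (V ∩ (H ∪ ⋃ σ ∈ E, Z σ)) := EqStar.rfl.inter hWstar
      refine h1.trans ?_
      have h2 : V ∩ (H ∪ ⋃ σ ∈ E, Z σ) = H ∪ ((⋃ σ ∈ F, Z σ) ∩ (⋃ σ ∈ E, Z σ)) := by
        rw [hV, ← Set.union_inter_distrib_left]
      rw [h2]
      exact eqStar_union_finite hFE
    · -- V ∪ W =* univ
      have h1 : EqStar (V ∪ W) (V ∪ (H ∪ ⋃ σ ∈ E, Z σ)) := EqStar.rfl.union hWstar
      refine h1.trans ?_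
      have h2 : V ∪ (H ∪ ⋃ σ ∈ E, Z σ) = H ∪ ⋃ σ ∈ lev n, Z σ := by
        rw [hV]
        ext x
        simp only [Set.mem_union, Set.mem_iUnion, hF, Finset.mem_sdiff]
        constructor
        · rintro ((hx | ⟨σ, hσ, hx⟩) | (hx | ⟨σ, hσ, hx⟩)) <;>
            first
              | (left; assumption)
              | (right; exact ⟨σ, hσ.1, hx⟩)
              | (right; exact ⟨σ, hEsub σ hσ, hx⟩)
        · rintro (hx | ⟨σ, hσ, hx⟩)
          · left; left; exact hx
          · by_cases hσE : σ ∈ E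
            · right; right; exact ⟨σ, hσE, hx⟩
            · left; right; exact ⟨σ, ⟨hσ, hσE⟩, hx⟩
      rw [h2]
      have h3 : EqStar (⋃ σ ∈ lev n, Z σ) (Z []) := by
        have := eqStar_lev_union hsplit ([] : List Bool) n
        simpa using this.symm
      refine ((EqStar.rfl.union h3).trans (EqStar.rfl.union hroot)).trans ?_
      exact EqStar.of_eq (by simp)
  · -- splitting
    intro W hW hHW hWinf
    obtain ⟨n, -, E, hElen, hE⟩ := key W hW hHW 0
    have hEne : E.Nonempty := by
      rcases E.eq_empty_or_nonempty with rfl | h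
      · exfalso
        have : (W ∩ Hᶜ).Finite := by
          have := hE.finite_diff
          simpa using this
        rw [← Set.diff_eq] at this
        exact hWinf this
      · exact h
    obtain ⟨σ₀, hσ₀⟩ := hEne
    set Zf := Z (σ₀ ++ [false]) with hZf
    set Zt := Z (σ₀ ++ [true]) with hZt
    set U' : Set ℕ := ⋃ σ ∈ E.erase σ₀, Z σ with hU'
    refine ⟨H ∪ Zf, (H ∪ Zt) ∪ (H ∪ U'), hce _, (hce _).union (hceU _),
      Set.subset_union_left, Set.subset_union_left.trans Set.subset_union_left, ?_, ?_, ?_, ?_⟩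
    · -- union =* W
      have h1 : (H ∪ Zf) ∪ ((H ∪ Zt) ∪ (H ∪ U')) = H ∪ ((Zf ∪ Zt) ∪ U') := by
        ext x; simp only [Set.mem_union]; tauto
      rw [h1]
      have h2 : EqStar (H ∪ ((Zf ∪ Zt) ∪ U')) (H ∪ (Z σ₀ ∪ U')) :=
        EqStar.rfl.union (((hsplit σ₀).2.symm).union EqStar.rfl)
      refine h2.trans ?_
      have h3 : Z σ₀ ∪ U' = ⋃ σ ∈ E, Z σ := by
        rw [hU']
        conv_rhs => rw [← Finset.insert_erase hσ₀]
        rw [Finset.set_biUnion_insert]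
      rw [h3]
      have hWeq : W = H ∪ (W ∩ Hᶜ) := by
        ext x; simp only [Set.mem_union, Set.mem_inter_iff, Set.mem_compl_iff]
        constructor
        · intro hx
          by_cases hxH : x ∈ H
          · exact Or.inl hxH
          · exact Or.inr ⟨hx, hxH⟩
        · rintro (hx | ⟨hx, -⟩)
          exacts [hHW hx, hx]
      exact ((EqStar.rfl.union hE.symm).trans (EqStar.of_eq hWeq.symm))
    · -- inter =* H
      have h1 : (H ∪ Zf) ∩ ((H ∪ Zt) ∪ (H ∪ U')) = H ∪ (Zf ∩ (Zt ∪ U')) := by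
        ext x; simp only [Set.mem_union, Set.mem_inter_iff]; tauto
      rw [h1]
      have hfin : (Zf ∩ (Zt ∪ U')).Finite := by
        have hft : Zf ∩ Zt = ∅ := (hsplit σ₀).1
        have hdesc : (Zf \ Z σ₀).Finite := by
          simpa using diff_desc_finite hsplit σ₀ [false]
        have hU'fin : (Z σ₀ ∩ U').Finite := by
          have : Z σ₀ = ⋃ σ ∈ ({σ₀} : Finset (List Bool)), Z σ := by simp
          rw [this, hU']
          refine biUnion_inter_finite hsplit
            (fun σ hσ => by rw [Finset.mem_singleton.1 hσ]; exact hElen σ₀ hσ₀)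
            (fun τ hτ => hElen τ (Finset.mem_of_mem_erase hτ)) ?_
          intro σ hσ
          simp only [Finset.mem_singleton] at hσ
          subst hσ
          exact Finset.notMem_erase σ E
        refine (hdesc.union hU'fin).subset ?_
        intro x hx
        simp only [Set.mem_inter_iff, Set.mem_union, Set.mem_diff] at *
        rcases hx with ⟨hxf, hxt | hxu⟩
        · exact absurd (Set.mem_inter hxf hxt) (by simp [hft])
        · by_cases hx0 : x ∈ Z σ₀
          · right; exact ⟨hx0, hxu⟩
          · left; exact ⟨hxf, hx0⟩
      exact eqStar_union_finite hfin
    · -- W₀ \ H infinite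
      refine (hinf (σ₀ ++ [false])).mono ?_
      intro x hx
      exact ⟨Or.inr hx, fun hxH => (hsub _ hx) hxH⟩
    · -- W₁ \ H infinite
      refine (hinf (σ₀ ++ [true])).mono ?_
      intro x hx
      exact ⟨Or.inl (Or.inr hx), fun hxH => (hsub _ hx) hxH⟩

end Hhs
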